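/- Let V be a d-dimensional vector space over F_q, and for i ∈ [m] let s_i ≥ 0 and π_i: V → V_i be linear maps such that for every subspace U ⊆ V, dim(U) ≤ Σ_{i=1}^m s_i·dim(π_i(U)). Then for every probability distribution X on V, the Shannon entropies satisfy H(X) ≤ Σ_{i=1}^m s_i·H(π_i(X)). -/

import Mathlib

open Module Finset

namespace BLaux

lemma rpow_add_nonneg {A p q : ℝ} (hA : 0 ≤ A) (hp : 0 ≤ p) (hq : 0 ≤ q) :
    A ^ (p + q) = A ^ p * A ^ q := by
  rcases hA.eq_or_lt with h | h
  · rcases hp.eq_or_lt with hp' | hp'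
    · rcases hq.eq_or_lt with hq' | hq'
      · simp [← hp', ← hq']
      · simp [← hp', ← h, Real.zero_rpow hq'.ne']
    · rw [← h, Real.zero_rpow (by positivity : p + q ≠ 0), Real.zero_rpow hp'.ne', zero_mul]
  · exact Real.rpow_add h p q

lemma rpow_convex {A p q l mu : ℝ} (hA : 0 ≤ A) (hp : 0 ≤ p) (hq : 0 ≤ q)
    (hl : 0 ≤ l) (hm : 0 ≤ mu) :
    A ^ (l * p + mu * q) = (A ^ p) ^ l * (A ^ q) ^ mu := by
  rw [rpow_add_nonneg hA (by positivity) (by positivity), mul_comm l p, mul_comm mu q,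
    Real.rpow_mul hA, Real.rpow_mul hA]

lemma two_term_rpow {a b p : ℝ} (ha : 0 ≤ a) (hb : 0 ≤ b) (hp : 1 ≤ p) :
    a ^ p + b ^ p ≤ (a + b) ^ p := by
  have h1 : a ^ p ≤ a * (a + b) ^ (p - 1) := by
    calc a ^ p = a ^ (1 + (p - 1)) := by ring_nf
    _ = a ^ (1:ℝ) * a ^ (p - 1) := rpow_add_nonneg ha zero_le_one (by linarith)
    _ ≤ a * (a + b) ^ (p - 1) := by
        rw [Real.rpow_one]
        exact mul_le_mul_of_nonneg_left
          (Real.rpow_le_rpow ha (by linarith) (by linarith)) ha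
  have h2 : b ^ p ≤ b * (a + b) ^ (p - 1) := by
    calc b ^ p = b ^ (1 + (p - 1)) := by ring_nf
    _ = b ^ (1:ℝ) * b ^ (p - 1) := rpow_add_nonneg hb zero_le_one (by linarith)
    _ ≤ b * (a + b) ^ (p - 1) := by
        rw [Real.rpow_one]
        exact mul_le_mul_of_nonneg_left
          (Real.rpow_le_rpow hb (by linarith) (by linarith)) hb
  calc a ^ p + b ^ p ≤ (a + b) * (a + b) ^ (p - 1) := by rw [add_mul]; exact add_le_add h1 h2
  _ = (a + b) ^ (1 + (p - 1)) := by
      rw [rpow_add_nonneg (by positivity) zero_le_one (by linarith), Real.rpow_one]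
  _ = (a + b) ^ p := by ring_nf

lemma sum_rpow_le {α : Type*} (t : Finset α) (g : α → ℝ) (hg : ∀ a, 0 ≤ g a) {p : ℝ}
    (hp : 1 ≤ p) : ∑ a ∈ t, g a ^ p ≤ (∑ a ∈ t, g a) ^ p := by
  classical
  induction t using Finset.induction_on with
  | empty => simp [Real.zero_rpow (by linarith : p ≠ 0)]
  | @insert a t' hx ih =>
    rw [Finset.sum_insert hx, Finset.sum_insert hx]
    calc g a ^ p + ∑ x ∈ t', g x ^ p ≤ g a ^ p + (∑ x ∈ t', g x) ^ p := by linarith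
    _ ≤ (g a + ∑ x ∈ t', g x) ^ p :=
        two_term_rpow (hg a) (Finset.sum_nonneg fun x _ => hg x) hp

lemma hoelder2 {α : Type*} [Fintype α] (a b : α → ℝ) (ha : ∀ x, 0 ≤ a x) (hb : ∀ x, 0 ≤ b x)
    {l mu : ℝ} (hl : 0 ≤ l) (hm : 0 ≤ mu) (hlm : l + mu = 1) :
    ∑ x, a x ^ l * b x ^ mu ≤ (∑ x, a x) ^ l * (∑ x, b x) ^ mu := by
  rcases hl.eq_or_lt with hl0 | hl0
  · have hmu : mu = 1 := by linarith
    simp [← hl0, hmu]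
  rcases hm.eq_or_lt with hm0 | hm0
  · have hll : l = 1 := by linarith
    simp [← hm0, hll]
  set A := ∑ x, a x with hA
  set B := ∑ x, b x with hB
  have hA0 : 0 ≤ A := Finset.sum_nonneg fun x _ => ha x
  have hB0 : 0 ≤ B := Finset.sum_nonneg fun x _ => hb x
  rcases hA0.eq_or_lt with hA' | hA'
  · have haz : ∀ x, a x = 0 := by
      intro x
      have := (Finset.sum_eq_zero_iff_of_nonneg (fun x _ => ha x)).mp hA'.symm
      exact this x (Finset.mem_univ x)
    rw [← hA', Real.zero_rpow hl0.ne', zero_mul]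
    apply le_of_eq
    apply Finset.sum_eq_zero
    intro x _
    rw [haz x, Real.zero_rpow hl0.ne', zero_mul]
  rcases hB0.eq_or_lt with hB' | hB'
  · have hbz : ∀ x, b x = 0 := by
      intro x
      have := (Finset.sum_eq_zero_iff_of_nonneg (fun x _ => hb x)).mp hB'.symm
      exact this x (Finset.mem_univ x)
    rw [← hB', Real.zero_rpow hm0.ne', mul_zero]
    apply le_of_eq
    apply Finset.sum_eq_zero
    intro x _
    rw [hbz x, Real.zero_rpow hm0.ne', mul_zero]
  have key : ∀ x, a x ^ l * b x ^ mu ≤ A ^ l * B ^ mu * (l * (a x / A) + mu * (b x / B)) := by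
    intro x
    have h := Real.geom_mean_le_arith_mean2_weighted hl hm
      (div_nonneg (ha x) hA0) (div_nonneg (hb x) hB0) hlm
    calc a x ^ l * b x ^ mu = (A * (a x / A)) ^ l * (B * (b x / B)) ^ mu := by
          rw [mul_div_cancel₀ _ hA'.ne', mul_div_cancel₀ _ hB'.ne']
    _ = A ^ l * B ^ mu * ((a x / A) ^ l * (b x / B) ^ mu) := by
        rw [Real.mul_rpow hA0 (div_nonneg (ha x) hA0),
          Real.mul_rpow hB0 (div_nonneg (hb x) hB0)]
        ring
    _ ≤ A ^ l * B ^ mu * (l * (a x / A) + mu * (b x / B)) := by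
        apply mul_le_mul_of_nonneg_left h (by positivity)
  calc ∑ x, a x ^ l * b x ^ mu ≤ ∑ x, A ^ l * B ^ mu * (l * (a x / A) + mu * (b x / B)) :=
        Finset.sum_le_sum fun x _ => key x
  _ = A ^ l * B ^ mu * (l * (A / A) + mu * (B / B)) := by
      rw [← Finset.mul_sum]
      congr 1
      rw [Finset.sum_add_distrib, ← Finset.mul_sum, ← Finset.mul_sum, ← Finset.sum_div,
        ← Finset.sum_div]
  _ = A ^ l * B ^ mu := by
      rw [div_self hA'.ne', div_self hB'.ne']
      rw [mul_one, mul_one, hlm, mul_one]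

lemma moduleFinite (F M : Type*) [Semiring F] [AddCommMonoid M] [Module F M] [Finite M] :
    Module.Finite F M :=
  ⟨Submodule.fg_def.mpr ⟨Set.univ, Set.finite_univ, Submodule.span_univ⟩⟩




universe w u v

section Data

variable {F : Type w} [Field F] {V : Type u} [AddCommGroup V] [Module F V] [Fintype V]
  {m : ℕ} {W : Fin m → Type v} [∀ i, AddCommGroup (W i)] [∀ i, Module F (W i)]
  [∀ i, Fintype (W i)]

/-- left side of the functional Brascamp–Lieb inequality -/
noncomputable def LHS (π : ∀ i, V →ₗ[F] W i) (s : Fin m → ℝ) (f : ∀ i, W i → ℝ) : ℝ :=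
  ∑ v : V, ∏ i, (f i (π i v)) ^ (s i)

/-- right side of the functional Brascamp–Lieb inequality -/
noncomputable def RHS (W : Fin m → Type v) [∀ i, AddCommGroup (W i)] [∀ i, Module F (W i)]
    [∀ i, Fintype (W i)] (s : Fin m → ℝ) (f : ∀ i, W i → ℝ) : ℝ :=
  ∏ i, (∑ x, f i x) ^ (s i)

/-- membership in the Brascamp–Lieb polytope -/
def Pmem (π : ∀ i, V →ₗ[F] W i) (s : Fin m → ℝ) : Prop :=
  ∀ U : Submodule F V, (finrank F ↥U : ℝ) ≤ ∑ i, s i * (finrank F ↥(U.map (π i)) : ℝ)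

/-- the functional Brascamp–Lieb inequality holds for coefficients `s` -/
def Prov (π : ∀ i, V →ₗ[F] W i) (s : Fin m → ℝ) : Prop :=
  ∀ f : ∀ i, W i → ℝ, (∀ i x, 0 ≤ f i x) → LHS π s f ≤ RHS (F := F) W s f

variable (π : ∀ i, V →ₗ[F] W i)

lemma RHS_nonneg (s : Fin m → ℝ) (f : ∀ i, W i → ℝ) (hf : ∀ i x, 0 ≤ f i x) :
    0 ≤ RHS (F := F) W s f :=
  Finset.prod_nonneg fun i _ => Real.rpow_nonneg (Finset.sum_nonneg fun x _ => hf i x) _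

lemma prov_mono {s s' : Fin m → ℝ} (hs' : ∀ i, 0 ≤ s' i) (hle : ∀ i, s' i ≤ s i)
    (h : Prov π s') : Prov π s := by
  intro f hf
  have hsum : ∀ i, 0 ≤ ∑ x, f i x := fun i => Finset.sum_nonneg fun x _ => hf i x
  have key : ∀ v : V, ∏ i, (f i (π i v)) ^ (s i) ≤
      (∏ i, (∑ x, f i x) ^ (s i - s' i)) * ∏ i, (f i (π i v)) ^ (s' i) := by
    intro v
    rw [← Finset.prod_mul_distrib]
    apply Finset.prod_le_prod
    · intro i _; exact Real.rpow_nonneg (hf _ _) _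
    · intro i _
      have h1 : f i (π i v) ^ s i = f i (π i v) ^ (s i - s' i) * f i (π i v) ^ (s' i) := by
        rw [← rpow_add_nonneg (hf _ _) (by linarith [hle i]) (hs' i)]
        ring_nf
      rw [h1]
      apply mul_le_mul_of_nonneg_right _ (Real.rpow_nonneg (hf _ _) _)
      exact Real.rpow_le_rpow (hf _ _) (Finset.single_le_sum (fun x _ => hf i x)
        (Finset.mem_univ _)) (by linarith [hle i])
  calc LHS π s f ≤ ∑ v : V, (∏ i, (∑ x, f i x) ^ (s i - s' i)) * ∏ i, (f i (π i v)) ^ (s' i) :=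
        Finset.sum_le_sum fun v _ => key v
  _ = (∏ i, (∑ x, f i x) ^ (s i - s' i)) * LHS π s' f := by rw [← Finset.mul_sum]; rfl
  _ ≤ (∏ i, (∑ x, f i x) ^ (s i - s' i)) * RHS (F := F) W s' f := by
      apply mul_le_mul_of_nonneg_left (h f hf)
      exact Finset.prod_nonneg fun i _ => Real.rpow_nonneg (hsum i) _
  _ = RHS (F := F) W s f := by
      unfold RHS
      rw [← Finset.prod_mul_distrib]
      apply Finset.prod_congr rfl
      intro i _
      rw [← rpow_add_nonneg (hsum i) (by linarith [hle i]) (hs' i)]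
      ring_nf

lemma prov_convex {s₁ s₂ : Fin m → ℝ} (hs₁ : ∀ i, 0 ≤ s₁ i) (hs₂ : ∀ i, 0 ≤ s₂ i)
    {l mu : ℝ} (hl : 0 ≤ l) (hm : 0 ≤ mu) (hlm : l + mu = 1)
    (h₁ : Prov π s₁) (h₂ : Prov π s₂) : Prov π (fun i => l * s₁ i + mu * s₂ i) := by
  intro f hf
  have hsum : ∀ i, 0 ≤ ∑ x, f i x := fun i => Finset.sum_nonneg fun x _ => hf i x
  have key : ∀ v : V, ∏ i, (f i (π i v)) ^ (l * s₁ i + mu * s₂ i) =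
      (∏ i, (f i (π i v)) ^ (s₁ i)) ^ l * (∏ i, (f i (π i v)) ^ (s₂ i)) ^ mu := by
    intro v
    rw [← Real.finset_prod_rpow _ _ (fun i _ => Real.rpow_nonneg (hf _ _) _) l,
      ← Real.finset_prod_rpow _ _ (fun i _ => Real.rpow_nonneg (hf _ _) _) mu,
      ← Finset.prod_mul_distrib]
    exact Finset.prod_congr rfl fun i _ =>
      rpow_convex (hf _ _) (hs₁ i) (hs₂ i) hl hm
  calc LHS π (fun i => l * s₁ i + mu * s₂ i) f
      = ∑ v : V, (∏ i, (f i (π i v)) ^ (s₁ i)) ^ l * (∏ i, (f i (π i v)) ^ (s₂ i)) ^ mu := by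
        unfold LHS; exact Finset.sum_congr rfl fun v _ => key v
  _ ≤ (∑ v : V, ∏ i, (f i (π i v)) ^ (s₁ i)) ^ l * (∑ v : V, ∏ i, (f i (π i v)) ^ (s₂ i)) ^ mu :=
      hoelder2 _ _ (fun v => Finset.prod_nonneg fun i _ => Real.rpow_nonneg (hf _ _) _)
        (fun v => Finset.prod_nonneg fun i _ => Real.rpow_nonneg (hf _ _) _) hl hm hlm
  _ ≤ (RHS (F := F) W s₁ f) ^ l * (RHS (F := F) W s₂ f) ^ mu := by
      apply mul_le_mul
      · exact Real.rpow_le_rpow (Finset.sum_nonneg fun v _ =>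
          Finset.prod_nonneg fun i _ => Real.rpow_nonneg (hf _ _) _) (h₁ f hf) hl
      · exact Real.rpow_le_rpow (Finset.sum_nonneg fun v _ =>
          Finset.prod_nonneg fun i _ => Real.rpow_nonneg (hf _ _) _) (h₂ f hf) hm
      · exact Real.rpow_nonneg (Finset.sum_nonneg fun v _ =>
          Finset.prod_nonneg fun i _ => Real.rpow_nonneg (hf _ _) _) _
      · exact Real.rpow_nonneg (RHS_nonneg _ _ hf) _
  _ = RHS (F := F) W (fun i => l * s₁ i + mu * s₂ i) f := by
      unfold RHS
      rw [← Real.finset_prod_rpow _ _ (fun i _ => Real.rpow_nonneg (hsum i) _) l,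
        ← Real.finset_prod_rpow _ _ (fun i _ => Real.rpow_nonneg (hsum i) _) mu,
        ← Finset.prod_mul_distrib]
      exact (Finset.prod_congr rfl fun i _ =>
        rpow_convex (hsum i) (hs₁ i) (hs₂ i) hl hm).symm

end Data

/-- The functional Brascamp–Lieb statement for all data of dimension at most `d`. -/
def Stmt (F : Type w) [Field F] (d : ℕ) : Prop :=
  ∀ (V : Type u) [AddCommGroup V] [Module F V] [Fintype V]
    (m : ℕ) (W : Fin m → Type v) [∀ i, AddCommGroup (W i)] [∀ i, Module F (W i)]
    [∀ i, Fintype (W i)] (π : ∀ i, V →ₗ[F] W i) (s : Fin m → ℝ),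
    (∀ i, 0 ≤ s i) → finrank F V ≤ d → Pmem π s → Prov π s

lemma finrank_map_mkQ_add {F M : Type*} [Field F] [AddCommGroup M] [Module F M]
    [FiniteDimensional F M] {U U' : Submodule F M} (h : U ≤ U') :
    finrank F ↥(U'.map U.mkQ) + finrank F ↥U = finrank F ↥U' := by
  have h1 := LinearMap.finrank_range_add_finrank_ker (U.mkQ.comp U'.subtype)
  rw [LinearMap.range_comp, Submodule.range_subtype, LinearMap.ker_comp, Submodule.ker_mkQ,
    (Submodule.comapSubtypeEquivOfLe h).finrank_eq] at h1
  exact h1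

lemma caseA {F : Type w} [Field F] {V : Type u} [AddCommGroup V] [Module F V] [Fintype V]
    {m : ℕ} {W : Fin m → Type v} [∀ i, AddCommGroup (W i)] [∀ i, Module F (W i)]
    [∀ i, Fintype (W i)] (π : ∀ i, V →ₗ[F] W i) {d : ℕ}
    (IH : Stmt.{w, u, v} F d) (hd : finrank F V ≤ d + 1) (s : Fin m → ℝ) (hs : ∀ i, 0 ≤ s i)
    (hP : Pmem π s) (U : Submodule F V) (hU0 : U ≠ ⊥) (hUtop : U ≠ ⊤)
    (hcrit : (finrank F ↥U : ℝ) = ∑ i, s i * (finrank F ↥(U.map (π i)) : ℝ)) :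
    Prov π s := by
  classical
  haveI hFD : FiniteDimensional F V := moduleFinite F V
  haveI hFDW : ∀ i, FiniteDimensional F (W i) := fun i => moduleFinite F (W i)
  haveI : Fintype ↥U := Fintype.ofFinite _
  haveI : Fintype (V ⧸ U) := Fintype.ofFinite _
  haveI : ∀ i, Fintype (W i ⧸ U.map (π i)) := fun i => Fintype.ofFinite _
  have hUd : 0 < finrank F ↥U :=
    Nat.pos_of_ne_zero fun h0 => hU0 (Submodule.finrank_eq_zero.mp h0)
  have hUlt : finrank F ↥U ≤ d := by
    have := Submodule.finrank_lt hUtop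
    omega
  have hQd : finrank F (V ⧸ U) ≤ d := by
    have := Submodule.finrank_quotient_add_finrank U
    omega
  set πq : ∀ i, (V ⧸ U) →ₗ[F] (W i ⧸ U.map (π i)) :=
    fun i => Submodule.mapQ U (U.map (π i)) (π i)
      (fun x hx => Submodule.mem_map_of_mem hx) with hπq
  set πU : ∀ i, ↥U →ₗ[F] W i := fun i => (π i).comp U.subtype with hπU
  -- polytope condition for the fibre data
  have hPU : Pmem πU s := by
    intro U''
    have e1 : ∀ i, (U''.map (πU i)) = ((U''.map U.subtype).map (π i)) := fun i =>
      Submodule.map_comp _ _ _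
    have e2 : finrank F ↥U'' = finrank F ↥(U''.map U.subtype) :=
      (Submodule.finrank_map_subtype_eq U U'').symm
    have := hP (U''.map U.subtype)
    rw [← e2] at this
    calc (finrank F ↥U'' : ℝ) ≤ ∑ i, s i * (finrank F ↥((U''.map U.subtype).map (π i)) : ℝ) :=
          this
    _ = ∑ i, s i * (finrank F ↥(U''.map (πU i)) : ℝ) := by
        apply Finset.sum_congr rfl; intro i _; rw [e1 i]
  -- polytope condition for the quotient data
  have hPq : Pmem πq s := by
    intro Ub
    set U' := Ub.comap U.mkQ with hU'
    have hle : U ≤ U' := by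
      intro x hx
      have : U.mkQ x = 0 := by
        simpa [Submodule.mkQ_apply] using (Submodule.Quotient.mk_eq_zero U).mpr hx
      simp [hU', Submodule.mem_comap, this]
    have hmap : U'.map U.mkQ = Ub := by
      rw [hU', Submodule.map_comap_eq, Submodule.range_mkQ, top_inf_eq]
    have hA : finrank F ↥Ub + finrank F ↥U = finrank F ↥U' := by
      rw [← hmap]; exact finrank_map_mkQ_add hle
    have hB : ∀ i, finrank F ↥(Ub.map (πq i)) + finrank F ↥(U.map (π i))
        = finrank F ↥(U'.map (π i)) := by
      intro i
      have e : Ub.map (πq i) = (U'.map (π i)).map (U.map (π i)).mkQ := by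
        calc Ub.map (πq i) = (U'.map U.mkQ).map (πq i) := by rw [hmap]
        _ = U'.map ((πq i).comp U.mkQ) := (Submodule.map_comp _ _ _).symm
        _ = U'.map ((U.map (π i)).mkQ.comp (π i)) := by
            rw [hπq, Submodule.mapQ_mkQ]
        _ = (U'.map (π i)).map (U.map (π i)).mkQ := Submodule.map_comp _ _ _
      rw [e]
      exact finrank_map_mkQ_add (Submodule.map_mono hle)
    have h1 := hP U'
    have hAc : (finrank F ↥Ub : ℝ) + finrank F ↥U = finrank F ↥U' := by exact_mod_cast hA
    have hsum : ∑ i, s i * (finrank F ↥(U'.map (π i)) : ℝ)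
        = (∑ i, s i * (finrank F ↥(Ub.map (πq i)) : ℝ)) + finrank F ↥U := by
      rw [hcrit, ← Finset.sum_add_distrib]
      apply Finset.sum_congr rfl
      intro i _
      have : ((finrank F ↥(U'.map (π i)) : ℝ)) =
          (finrank F ↥(Ub.map (πq i)) : ℝ) + finrank F ↥(U.map (π i)) := by
        exact_mod_cast (hB i).symm
      rw [this]; ring
    rw [hsum] at h1
    linarith
  -- the decomposition of the sum over V into cosets of U
  intro f hf
  have hout : ∀ c : V ⧸ U, Submodule.Quotient.mk (Quotient.out c) = c := fun c =>
    Quotient.out_eq' c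
  set E : (V ⧸ U) × ↥U ≃ V :=
    { toFun := fun p => Quotient.out p.1 + ↑p.2
      invFun := fun v => (Submodule.Quotient.mk v,
        ⟨v - Quotient.out (Submodule.Quotient.mk v), by
          rw [← Submodule.Quotient.eq]
          rw [hout]⟩)
      left_inv := by
        rintro ⟨c, u⟩
        have h1 : Submodule.Quotient.mk (p := U) (Quotient.out c + ↑u) = c := by
          rw [Submodule.Quotient.mk_add, hout, (Submodule.Quotient.mk_eq_zero U).mpr u.2,
            add_zero]
        refine Prod.ext ?_ ?_
        · exact h1
        · apply Subtype.ext
          show Quotient.out c + ↑u - Quotient.out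
            (Submodule.Quotient.mk (Quotient.out c + ↑u)) = ↑u
          rw [h1]
          exact add_sub_cancel_left _ _
      right_inv := fun v => by simp } with hE
  have hsplit : ∀ g : V → ℝ,
      ∑ v : V, g v = ∑ c : V ⧸ U, ∑ u : ↥U, g (Quotient.out c + ↑u) := by
    intro g
    rw [← Equiv.sum_comp E g, Fintype.sum_prod_type]
    rfl
  -- fibre masses
  set Ff : ∀ i, (W i ⧸ U.map (π i)) → ℝ :=
    fun i y => ∑ x : W i, if Submodule.Quotient.mk x = y then f i x else 0 with hFf
  have hFf0 : ∀ i y, 0 ≤ Ff i y := by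
    intro i y
    apply Finset.sum_nonneg
    intro x _
    by_cases h : Submodule.Quotient.mk x = y <;> simp [h, hf]
  -- inner estimate on each coset
  have inner : ∀ c : V ⧸ U,
      ∑ u : ↥U, ∏ i, (f i (π i (Quotient.out c + ↑u))) ^ (s i)
        ≤ ∏ i, (Ff i (πq i c)) ^ (s i) := by
    intro c
    set g : ∀ i, W i → ℝ := fun i x =>
      if x ∈ U.map (π i) then f i (π i (Quotient.out c) + x) else 0 with hg
    have hg0 : ∀ i x, 0 ≤ g i x := by
      intro i x
      simp only [hg]
      split
      · exact hf _ _
      · exact le_rfl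
    have hmatch : ∀ (u : ↥U) i, g i (πU i u) = f i (π i (Quotient.out c + ↑u)) := by
      intro u i
      have hmem : πU i u ∈ U.map (π i) := ⟨↑u, u.2, rfl⟩
      simp only [hg]
      rw [if_pos hmem, map_add]
      rfl
    have hgsum : ∀ i, ∑ x, g i x = Ff i (πq i c) := by
      intro i
      have hc : πq i c = Submodule.Quotient.mk (π i (Quotient.out c)) := by
        conv_lhs => rw [← hout c]
        exact Submodule.mapQ_apply _ _ _ _
      rw [hc, hFf]
      apply Fintype.sum_equiv (Equiv.addLeft (π i (Quotient.out c)))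
      intro x
      simp only [hg, Equiv.coe_addLeft]
      have hiff : (Submodule.Quotient.mk (π i (Quotient.out c) + x)
          = Submodule.Quotient.mk (p := U.map (π i)) (π i (Quotient.out c)))
          ↔ x ∈ U.map (π i) := by
        rw [Submodule.Quotient.eq]
        simp
      by_cases h : x ∈ U.map (π i)
      · rw [if_pos h]; exact (ite_cond_eq_true _ _ (eq_true (hiff.mpr h))).symm
      · rw [if_neg h]; exact (ite_cond_eq_false _ _ (eq_false (fun hh => h (hiff.mp hh)))).symm
    have happ := IH (↥U) m W πU s hs hUlt hPU g hg0
    unfold LHS RHS at happ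
    calc ∑ u : ↥U, ∏ i, (f i (π i (Quotient.out c + ↑u))) ^ (s i)
        = ∑ u : ↥U, ∏ i, (g i (πU i u)) ^ (s i) := by
          apply Finset.sum_congr rfl
          intro u _
          apply Finset.prod_congr rfl
          intro i _
          rw [hmatch u i]
    _ ≤ ∏ i, (∑ x, g i x) ^ (s i) := happ
    _ = ∏ i, (Ff i (πq i c)) ^ (s i) := by
        apply Finset.prod_congr rfl
        intro i _
        rw [hgsum i]
  -- assemble
  have hQ := IH (V ⧸ U) m (fun i => W i ⧸ U.map (π i)) πq s hs hQd hPq Ff hFf0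
  unfold LHS RHS at hQ ⊢
  calc ∑ v : V, ∏ i, (f i (π i v)) ^ (s i)
      = ∑ c : V ⧸ U, ∑ u : ↥U, ∏ i, (f i (π i (Quotient.out c + ↑u))) ^ (s i) :=
        hsplit _
  _ ≤ ∑ c : V ⧸ U, ∏ i, (Ff i (πq i c)) ^ (s i) := Finset.sum_le_sum fun c _ => inner c
  _ ≤ ∏ i, (∑ y, Ff i y) ^ (s i) := hQ
  _ = ∏ i, (∑ x, f i x) ^ (s i) := by
      apply Finset.prod_congr rfl
      intro i _
      congr 1
      rw [hFf, Finset.sum_comm]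
      apply Finset.sum_congr rfl
      intro x _
      simp

lemma prov_of_rank_zero {F : Type w} [Field F] {V : Type u} [AddCommGroup V] [Module F V]
    [Fintype V] {m : ℕ} {W : Fin m → Type v} [∀ i, AddCommGroup (W i)] [∀ i, Module F (W i)]
    [∀ i, Fintype (W i)] (π : ∀ i, V →ₗ[F] W i) (s : Fin m → ℝ) (hs : ∀ i, 0 ≤ s i)
    (hd : finrank F V = 0) : Prov π s := by
  haveI := moduleFinite F V
  haveI : Subsingleton V := finrank_zero_iff.mp hd
  intro f hf
  unfold LHS RHS
  rw [Fintype.sum_subsingleton _ (0 : V)]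
  apply Finset.prod_le_prod
  · intro i _; exact Real.rpow_nonneg (hf _ _) _
  · intro i _
    exact Real.rpow_le_rpow (hf _ _)
      (Finset.single_le_sum (fun x _ => hf i x) (Finset.mem_univ _)) (hs i)

set_option maxHeartbeats 2000000 in
/-- The functional discrete Brascamp–Lieb inequality, by induction on the dimension. -/
theorem stmt_all (F : Type w) [Field F] : ∀ d : ℕ, Stmt.{w, u, v} F d := by
  intro d
  induction d with
  | zero =>
    intro V _ _ _ m W _ _ _ π s hs hd hP
    exact prov_of_rank_zero π s hs (by omega)
  | succ d IH =>
    intro V iV1 iV2 iV3 m W iW1 iW2 iW3 π sOut hsOut hd hPOut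
    classical
    haveI : FiniteDimensional F V := moduleFinite F V
    haveI : ∀ i, FiniteDimensional F (W i) := fun i => moduleFinite F (W i)
    by_cases hdle : finrank F V ≤ d
    · exact IH V m W π sOut hsOut hdle hPOut
    have hdpos : 0 < finrank F V := by omega
    haveI : Nontrivial V := Module.nontrivial_of_finrank_pos hdpos
    suffices H : ∀ n (s : Fin m → ℝ), (∀ i, 0 ≤ s i) → Pmem π s →
        ((univ.filter (fun i => s i ≠ 0)).card ≤ n) → Prov π s by
      exact H ((univ.filter (fun i => sOut i ≠ 0)).card) sOut hsOut hPOut le_rfl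
    intro n
    induction n with
    | zero =>
      intro s hs hP hcard
      exfalso
      have hzero : ∀ i, s i = 0 := by
        intro i
        by_contra hne
        have : i ∈ univ.filter (fun i => s i ≠ 0) := by simp [hne]
        rw [Finset.card_eq_zero.mp (Nat.le_zero.mp hcard)] at this
        exact absurd this (Finset.notMem_empty i)
      have h1 := hP ⊤
      rw [finrank_top] at h1
      have h2 : ∑ i, s i * (finrank F ↥((⊤ : Submodule F V).map (π i)) : ℝ) = 0 :=
        Finset.sum_eq_zero fun i _ => by rw [hzero i, zero_mul]
      rw [h2] at h1
      have : (0:ℝ) < finrank F V := by exact_mod_cast hdpos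
      linarith
    | succ n ihn =>
      intro s hs hP hcard
      -- Case A: a proper nontrivial critical subspace exists
      by_cases hA : ∃ U : Submodule F V, U ≠ ⊥ ∧ U ≠ ⊤ ∧
          (finrank F ↥U : ℝ) = ∑ i, s i * (finrank F ↥(U.map (π i)) : ℝ)
      · obtain ⟨U, h1, h2, h3⟩ := hA
        exact caseA π IH (by omega) s hs hP U h1 h2 h3
      -- a zero map with a nonzero coefficient: zero out the coefficient
      by_cases hz : ∃ i, s i ≠ 0 ∧ π i = 0
      · obtain ⟨i0, hi0, hpi0⟩ := hz
        set s' := Function.update s i0 0 with hs'def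
        have hs'0 : ∀ i, 0 ≤ s' i := by
          intro i
          by_cases h : i = i0
          · subst h; simp [hs'def]
          · rw [hs'def, Function.update_of_ne h]; exact hs i
        have hs'le : ∀ i, s' i ≤ s i := by
          intro i
          by_cases h : i = i0
          · subst h; simp [hs'def]; exact hs i
          · rw [hs'def, Function.update_of_ne h]
        have hP' : Pmem π s' := by
          intro Usub
          refine le_trans (hP Usub) (le_of_eq ?_)
          apply Finset.sum_congr rfl
          intro i _
          by_cases h : i = i0
          · subst h
            rw [hpi0, Submodule.map_zero]
            simp
          · rw [hs'def, Function.update_of_ne h]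
        have hcard' : (univ.filter (fun i => s' i ≠ 0)).card ≤ n := by
          have hsub : (univ.filter (fun i => s' i ≠ 0)) ⊆
              (univ.filter (fun i => s i ≠ 0)).erase i0 := by
            intro i hi
            simp only [mem_filter, mem_univ, true_and] at hi
            have hne : i ≠ i0 := by
              intro h
              apply hi
              rw [h, hs'def]
              simp
            rw [Finset.mem_erase]
            refine ⟨hne, ?_⟩
            simp only [mem_filter, mem_univ, true_and]
            rwa [hs'def, Function.update_of_ne hne] at hi
          have h1 : i0 ∈ univ.filter (fun i => s i ≠ 0) := by simp [hi0]
          have h2 := Finset.card_le_card hsub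
          rw [Finset.card_erase_of_mem h1] at h2
          omega
        exact prov_mono π hs'0 hs'le (ihn s' hs'0 hP' hcard')
      push_neg at hz
      -- support analysis
      set S := univ.filter (fun i => s i ≠ 0) with hSdef
      rcases Nat.lt_or_ge S.card 2 with hS2 | hS2
      · -- |S| ≤ 1
        rcases Nat.lt_or_ge S.card 1 with hS0 | hS1
        · -- S = ∅ : impossible
          exfalso
          have hzero : ∀ i, s i = 0 := by
            intro i
            by_contra hne
            have : i ∈ S := by simp [hSdef, hne]
            have := Finset.card_pos.mpr ⟨i, this⟩
            omega
          have h1 := hP ⊤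
          rw [finrank_top] at h1
          have h2 : ∑ i, s i * (finrank F ↥((⊤ : Submodule F V).map (π i)) : ℝ) = 0 :=
            Finset.sum_eq_zero fun i _ => by rw [hzero i, zero_mul]
          rw [h2] at h1
          have : (0:ℝ) < finrank F V := by exact_mod_cast hdpos
          linarith
        -- S = {i0}
        have hcard1 : S.card = 1 := by omega
        obtain ⟨i0, hi0S⟩ := Finset.card_eq_one.mp hcard1
        have hsi0 : s i0 ≠ 0 := by
          have : i0 ∈ S := by rw [hi0S]; exact Finset.mem_singleton_self i0
          simpa [hSdef] using this
        have hszero : ∀ i, i ≠ i0 → s i = 0 := by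
          intro i hi
          by_contra hne
          have : i ∈ S := by simp [hSdef, hne]
          rw [hi0S, Finset.mem_singleton] at this
          exact hi this
        have hπ0 : π i0 ≠ 0 := hz i0 hsi0
        have hker : LinearMap.ker (π i0) = ⊥ := by
          have h1 := hP (LinearMap.ker (π i0))
          have h3 : ∑ i, s i * (finrank F ↥((LinearMap.ker (π i0)).map (π i)) : ℝ) = 0 := by
            apply Finset.sum_eq_zero
            intro i _
            by_cases h : i = i0
            · subst h
              have hker0 : (LinearMap.ker (π i)).map (π i) = ⊥ := by
                rw [Submodule.eq_bot_iff]
                rintro x ⟨y, hy, rfl⟩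
                exact hy
              rw [hker0]
              simp
            · rw [hszero i h, zero_mul]
          rw [h3] at h1
          have : finrank F ↥(LinearMap.ker (π i0)) = 0 := by exact_mod_cast le_antisymm h1 (by positivity)
          exact Submodule.finrank_eq_zero.mp this
        have hinj : Function.Injective (π i0) := LinearMap.ker_eq_bot.mp hker
        have hs1 : 1 ≤ s i0 := by
          have h1 := hP ⊤
          rw [finrank_top] at h1
          have h2 : ∑ i, s i * (finrank F ↥((⊤ : Submodule F V).map (π i)) : ℝ)
              = s i0 * (finrank F ↥((⊤ : Submodule F V).map (π i0)) : ℝ) :=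
            Finset.sum_eq_single i0 (fun i _ hi => by rw [hszero i hi, zero_mul]) (by simp)
          rw [h2] at h1
          have h3 : finrank F ↥((⊤ : Submodule F V).map (π i0)) ≤ finrank F V := by
            rw [Submodule.map_top]
            exact (LinearMap.finrank_range_add_finrank_ker (π i0)) ▸ Nat.le_add_right _ _
          have h4 : (0:ℝ) < finrank F V := by exact_mod_cast hdpos
          have h5 : (finrank F ↥((⊤ : Submodule F V).map (π i0)) : ℝ) ≤ finrank F V := by
            exact_mod_cast h3
          nlinarith [hs i0]
        intro f hf
        unfold LHS RHS
        have hL : ∀ v, ∏ i, (f i (π i v)) ^ (s i) = (f i0 (π i0 v)) ^ (s i0) := fun v =>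
          Finset.prod_eq_single i0 (fun i _ hi => by rw [hszero i hi, Real.rpow_zero]) (by simp)
        have hR : ∏ i, (∑ x, f i x) ^ (s i) = (∑ x, f i0 x) ^ (s i0) :=
          Finset.prod_eq_single i0 (fun i _ hi => by rw [hszero i hi, Real.rpow_zero]) (by simp)
        rw [hR]
        calc ∑ v : V, ∏ i, (f i (π i v)) ^ (s i) = ∑ v : V, (f i0 (π i0 v)) ^ (s i0) :=
              Finset.sum_congr rfl fun v _ => hL v
        _ = ∑ x ∈ univ.image (π i0), (f i0 x) ^ (s i0) := by
            rw [Finset.sum_image fun x _ y _ hxy => hinj hxy]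
        _ ≤ ∑ x : W i0, (f i0 x) ^ (s i0) := by
            apply Finset.sum_le_sum_of_subset_of_nonneg (Finset.subset_univ _)
            intro x _ _
            exact Real.rpow_nonneg (hf _ _) _
        _ ≤ (∑ x, f i0 x) ^ (s i0) := sum_rpow_le _ _ (hf i0) hs1
      -- |S| ≥ 2 : the polytope argument
      obtain ⟨j, hjS, k, hkS, hjk⟩ := Finset.one_lt_card.mp hS2
      have hsjne : s j ≠ 0 := by simpa [hSdef] using hjS
      have hskne : s k ≠ 0 := by simpa [hSdef] using hkS
      have hsj : 0 < s j := lt_of_le_of_ne (hs j) (Ne.symm hsjne)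
      have hsk : 0 < s k := lt_of_le_of_ne (hs k) (Ne.symm hskne)
      have hπj : π j ≠ 0 := hz j hsjne
      have hπk : π k ≠ 0 := hz k hskne
      haveI : Fintype (Submodule F V) := Fintype.ofFinite _
      set dnm : Submodule F V → ℝ :=
        fun U => ∑ i, s i * (finrank F ↥(U.map (π i)) : ℝ) with hdnmdef
      have hdnm_pos : ∀ U : Submodule F V, U ≠ ⊥ → 0 < dnm U := by
        intro U hU
        have h2 : 0 < finrank F ↥U :=
          Nat.pos_of_ne_zero fun h0 => hU (Submodule.finrank_eq_zero.mp h0)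
        calc (0:ℝ) < (finrank F ↥U : ℝ) := by exact_mod_cast h2
        _ ≤ dnm U := hP U
      set ρ : Submodule F V → ℝ := fun U => (finrank F ↥U : ℝ) / dnm U with hρdef
      have hTopBot : (⊤ : Submodule F V) ≠ ⊥ := Ne.symm bot_ne_top
      set Θ : Finset ℝ := (univ.filter (fun U : Submodule F V => U ≠ ⊥)).image ρ with hΘdef
      have hΘne : Θ.Nonempty := ⟨ρ ⊤, Finset.mem_image_of_mem _ (by simp [hTopBot])⟩
      set θ := Θ.max' hΘne with hθdef
      obtain ⟨U₀, hU₀mem, hU₀ρ⟩ := Finset.mem_image.mp (Θ.max'_mem hΘne)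
      have hU₀ne : U₀ ≠ ⊥ := by
        have := (Finset.mem_filter.mp hU₀mem).2
        simpa using this
      have hθle : ∀ U : Submodule F V, U ≠ ⊥ → ρ U ≤ θ := fun U h =>
        Θ.le_max' _ (Finset.mem_image_of_mem _ (by simp [h]))
      have hU₀ρ' : ρ U₀ = θ := by rw [hθdef]; exact hU₀ρ
      have hθ1 : θ ≤ 1 := by
        rw [← hU₀ρ']
        simp only [hρdef]
        exact div_le_one_of_le₀ (hP U₀) (hdnm_pos U₀ hU₀ne).le
      have hθ0 : 0 < θ := by
        have h1 : 0 < ρ ⊤ := by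
          simp only [hρdef]
          apply div_pos _ (hdnm_pos ⊤ hTopBot)
          rw [finrank_top]
          exact_mod_cast hdpos
        exact lt_of_lt_of_le h1 (hθle ⊤ hTopBot)
      set s' : Fin m → ℝ := fun i => θ * s i with hs'def
      have hs'0 : ∀ i, 0 ≤ s' i := fun i => mul_nonneg hθ0.le (hs i)
      have hs'le : ∀ i, s' i ≤ s i := fun i => by
        simp only [hs'def]
        nlinarith [hs i]
      have hsum' : ∀ U : Submodule F V,
          ∑ i, s' i * (finrank F ↥(U.map (π i)) : ℝ) = θ * dnm U := by
        intro U
        simp only [hdnmdef, hs'def, Finset.mul_sum]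
        exact Finset.sum_congr rfl fun i _ => by ring
      have hP' : Pmem π s' := by
        intro U
        by_cases hU : U = ⊥
        · subst hU
          have hbr : (finrank F ↥(⊥ : Submodule F V) : ℝ) = 0 := by
            rw [finrank_bot]
            norm_num
          rw [hbr]
          exact Finset.sum_nonneg fun i _ => mul_nonneg (hs'0 i) (by positivity)
        · rw [hsum' U]
          have h1 := hθle U hU
          simp only [hρdef] at h1
          exact (div_le_iff₀ (hdnm_pos U hU)).mp h1
      by_cases hex : ∃ U : Submodule F V, U ≠ ⊥ ∧ U ≠ ⊤ ∧
          (finrank F ↥U : ℝ) = ∑ i, s' i * (finrank F ↥(U.map (π i)) : ℝ)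
      · obtain ⟨U, h1, h2, h3⟩ := hex
        exact prov_mono π hs'0 hs'le (caseA π IH (by omega) s' hs'0 hP' U h1 h2 h3)
      have htight : ∀ U : Submodule F V, U ≠ ⊥ → ρ U = θ →
          (finrank F ↥U : ℝ) = ∑ i, s' i * (finrank F ↥(U.map (π i)) : ℝ) := by
        intro U hU hρU
        rw [hsum' U, ← hρU]
        simp only [hρdef]
        rw [div_mul_cancel₀ _ (hdnm_pos U hU).ne']
      have htop : (finrank F V : ℝ)
          = ∑ i, s' i * (finrank F ↥((⊤ : Submodule F V).map (π i)) : ℝ) := by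
        by_cases hU₀top : U₀ = ⊤
        · have h1 := htight ⊤ hTopBot (hU₀top ▸ hU₀ρ')
          rwa [finrank_top] at h1
        · exact absurd ⟨U₀, hU₀ne, hU₀top, htight U₀ hU₀ne hU₀ρ'⟩ hex
      have hstrict : ∀ U : Submodule F V, U ≠ ⊥ → U ≠ ⊤ →
          (finrank F ↥U : ℝ) < ∑ i, s' i * (finrank F ↥(U.map (π i)) : ℝ) :=
        fun U h1 h2 => lt_of_le_of_ne (hP' U) fun h => hex ⟨U, h1, h2, h⟩
      set slack : Submodule F V → ℝ :=
        fun U => (∑ i, s' i * (finrank F ↥(U.map (π i)) : ℝ)) - finrank F ↥U with hslackdef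
      have hfs : ∀ U : Submodule F V,
          (finrank F ↥U : ℝ) = (∑ i, s' i * (finrank F ↥(U.map (π i)) : ℝ)) - slack U := by
        intro U
        simp only [hslackdef]
        ring
      have hslack0 : ∀ U, 0 ≤ slack U := by
        intro U
        simp only [hslackdef]
        linarith [hP' U]
      have hslackpos : ∀ U, U ≠ ⊥ → U ≠ ⊤ → 0 < slack U := by
        intro U h1 h2
        simp only [hslackdef]
        linarith [hstrict U h1 h2]
      have hslacktop : slack ⊤ = 0 := by
        simp only [hslackdef]
        rw [finrank_top]
        linarith [htop]
      set dj : ℝ := (finrank F ↥((⊤ : Submodule F V).map (π j)) : ℝ) with hdjdef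
      set dk : ℝ := (finrank F ↥((⊤ : Submodule F V).map (π k)) : ℝ) with hdkdef
      have hdj : 0 < dj := by
        have h1 : (⊤ : Submodule F V).map (π j) ≠ ⊥ := by
          rw [Submodule.map_top, ne_eq, LinearMap.range_eq_bot]
          exact hπj
        have h2 := Nat.pos_of_ne_zero fun h0 => h1 (Submodule.finrank_eq_zero.mp h0)
        simp only [hdjdef]
        exact_mod_cast h2
      have hdk : 0 < dk := by
        have h1 : (⊤ : Submodule F V).map (π k) ≠ ⊥ := by
          rw [Submodule.map_top, ne_eq, LinearMap.range_eq_bot]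
          exact hπk
        have h2 := Nat.pos_of_ne_zero fun h0 => h1 (Submodule.finrank_eq_zero.mp h0)
        simp only [hdkdef]
        exact_mod_cast h2
      set wdir : Fin m → ℝ := fun i => if i = j then -1 else if i = k then dj / dk else 0
        with hwdef
      set rate : Submodule F V → ℝ :=
        fun U => ∑ i, wdir i * (finrank F ↥(U.map (π i)) : ℝ) with hratedef
      have hrate_eq : ∀ U : Submodule F V, rate U
          = -(finrank F ↥(U.map (π j)) : ℝ) + (dj / dk) * (finrank F ↥(U.map (π k)) : ℝ) := by
        intro U
        simp only [hratedef]
        rw [← Finset.sum_subset (Finset.subset_univ ({j, k} : Finset (Fin m)))]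
        · rw [Finset.sum_pair hjk]
          have e1 : wdir j = -1 := by simp [hwdef]
          have e2 : wdir k = dj / dk := by simp [hwdef, Ne.symm hjk]
          rw [e1, e2]
          ring
        · intro i _ hi
          simp only [Finset.mem_insert, Finset.mem_singleton] at hi
          push_neg at hi
          have e0 : wdir i = 0 := by simp [hwdef, hi.1, hi.2]
          rw [e0]
          ring
      have hrate_bot : rate ⊥ = 0 := by
        rw [hrate_eq]
        rw [Submodule.map_bot, Submodule.map_bot]
        rw [finrank_bot]
        norm_num
      have hrate_top : rate ⊤ = 0 := by
        rw [hrate_eq, ← hdjdef, ← hdkdef]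
        field_simp
        ring
      have hsum_dir : ∀ (t : ℝ) (U : Submodule F V),
          ∑ i, (s' i + t * wdir i) * (finrank F ↥(U.map (π i)) : ℝ)
            = (∑ i, s' i * (finrank F ↥(U.map (π i)) : ℝ)) + t * rate U := by
        intro t U
        simp only [hratedef, Finset.mul_sum]
        rw [← Finset.sum_add_distrib]
        exact Finset.sum_congr rfl fun i _ => by ring
      -- the plus direction
      set Ap : Finset ℝ := insert (s' j)
        ((univ.filter (fun U : Submodule F V => rate U < 0)).image
          (fun U => slack U / (-rate U))) with hApdef
      have hApne : Ap.Nonempty := ⟨s' j, Finset.mem_insert_self _ _⟩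
      set T := Ap.min' hApne with hTdef
      have hTmempos : ∀ x ∈ Ap, 0 < x := by
        intro x hx
        rcases Finset.mem_insert.mp hx with h | h
        · rw [h]
          simp only [hs'def]
          exact mul_pos hθ0 hsj
        · obtain ⟨U, hU, rfl⟩ := Finset.mem_image.mp h
          have hrU : rate U < 0 := by
            have := (Finset.mem_filter.mp hU).2
            simpa using this
          have hUb : U ≠ ⊥ := fun h0 => by rw [h0, hrate_bot] at hrU; exact lt_irrefl 0 hrU
          have hUt : U ≠ ⊤ := fun h0 => by rw [h0, hrate_top] at hrU; exact lt_irrefl 0 hrU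
          exact div_pos (hslackpos U hUb hUt) (by linarith)
      have hT0 : 0 < T := (Finset.lt_min'_iff Ap hApne).mpr hTmempos
      have hTsj : T ≤ s' j := Ap.min'_le _ (Finset.mem_insert_self _ _)
      have hTrate : ∀ U : Submodule F V, rate U < 0 → T ≤ slack U / (-rate U) := fun U hU =>
        Ap.min'_le _ (Finset.mem_insert_of_mem (Finset.mem_image_of_mem _ (by simp [hU])))
      set s1 : Fin m → ℝ := fun i => s' i + T * wdir i with hs1def
      have hs10 : ∀ i, 0 ≤ s1 i := by
        intro i
        simp only [hs1def, hwdef]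
        by_cases h1 : i = j
        · rw [if_pos h1, h1]
          linarith [hTsj]
        · rw [if_neg h1]
          by_cases h2 : i = k
          · rw [if_pos h2]
            have : 0 ≤ T * (dj / dk) := by positivity
            linarith [hs'0 i]
          · rw [if_neg h2]
            linarith [hs'0 i]
      have hP1 : Pmem π s1 := by
        intro U
        simp only [hs1def]
        rw [hsum_dir T U]
        rcases le_or_gt 0 (rate U) with h | h
        · have h2 : 0 ≤ T * rate U := mul_nonneg hT0.le h
          linarith [hP' U]
        · have h1 := hTrate U h
          rw [le_div_iff₀ (by linarith : 0 < -rate U)] at h1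
          have h2 : -(T * rate U) ≤ slack U := by linarith
          linarith [hfs U, hslack0 U]
      have hprov1 : Prov π s1 := by
        rcases Finset.mem_insert.mp (Ap.min'_mem hApne) with hT1 | hT2
        · -- T = s' j, coefficient j vanishes
          apply ihn s1 hs10 hP1
          have hT1' : T = s' j := by rw [hTdef]; exact hT1
          have hjz : s1 j = 0 := by
            have e1 : wdir j = -1 := by simp [hwdef]
            simp only [hs1def, e1]
            rw [hT1']
            ring
          have hsub : (univ.filter (fun i => s1 i ≠ 0)) ⊆ S.erase j := by
            intro i hi
            simp only [Finset.mem_filter, Finset.mem_univ, true_and] at hi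
            have hij : i ≠ j := fun h => hi (h ▸ hjz)
            rw [Finset.mem_erase]
            refine ⟨hij, ?_⟩
            rw [hSdef]
            simp only [Finset.mem_filter, Finset.mem_univ, true_and]
            intro hsiz
            apply hi
            by_cases h2 : i = k
            · exact absurd (h2 ▸ hsiz) hskne
            · have e0 : wdir i = 0 := by simp [hwdef, hij, h2]
              simp only [hs1def, e0, hs'def, hsiz]
              ring
          have h1 := Finset.card_le_card hsub
          rw [Finset.card_erase_of_mem hjS] at h1
          omega
        · obtain ⟨Up, hUp, hUpval⟩ := Finset.mem_image.mp hT2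
          have hrU : rate Up < 0 := by
            have := (Finset.mem_filter.mp hUp).2
            simpa using this
          have hUb : Up ≠ ⊥ := fun h0 => by rw [h0, hrate_bot] at hrU; exact lt_irrefl 0 hrU
          have hUt : Up ≠ ⊤ := fun h0 => by rw [h0, hrate_top] at hrU; exact lt_irrefl 0 hrU
          apply caseA π IH (by omega) s1 hs10 hP1 Up hUb hUt
          simp only [hs1def]
          rw [hsum_dir T Up]
          have hUpval' : slack Up / (-rate Up) = T := by rw [hTdef]; exact hUpval
          have h2 : T * rate Up = -slack Up := by
            rw [← hUpval', div_mul_eq_mul_div, div_neg, mul_div_assoc, div_self hrU.ne,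
              mul_one]
          linarith [hfs Up]
      -- the minus direction
      set Am : Finset ℝ := insert (s' k * dk / dj)
        ((univ.filter (fun U : Submodule F V => 0 < rate U)).image
          (fun U => slack U / rate U)) with hAmdef
      have hAmne : Am.Nonempty := ⟨s' k * dk / dj, Finset.mem_insert_self _ _⟩
      set T' := Am.min' hAmne with hT'def
      have hT'mempos : ∀ x ∈ Am, 0 < x := by
        intro x hx
        rcases Finset.mem_insert.mp hx with h | h
        · rw [h]
          have h1 : 0 < s' k := by
            simp only [hs'def]
            exact mul_pos hθ0 hsk
          positivity
        · obtain ⟨U, hU, rfl⟩ := Finset.mem_image.mp h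
          have hrU : 0 < rate U := by
            have := (Finset.mem_filter.mp hU).2
            simpa using this
          have hUb : U ≠ ⊥ := fun h0 => by rw [h0, hrate_bot] at hrU; exact lt_irrefl 0 hrU
          have hUt : U ≠ ⊤ := fun h0 => by rw [h0, hrate_top] at hrU; exact lt_irrefl 0 hrU
          exact div_pos (hslackpos U hUb hUt) hrU
      have hT'0 : 0 < T' := (Finset.lt_min'_iff Am hAmne).mpr hT'mempos
      have hT'sk : T' ≤ s' k * dk / dj := Am.min'_le _ (Finset.mem_insert_self _ _)
      have hT'rate : ∀ U : Submodule F V, 0 < rate U → T' ≤ slack U / rate U := fun U hU =>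
        Am.min'_le _ (Finset.mem_insert_of_mem (Finset.mem_image_of_mem _ (by simp [hU])))
      set s2 : Fin m → ℝ := fun i => s' i + (-T') * wdir i with hs2def
      have hs20 : ∀ i, 0 ≤ s2 i := by
        intro i
        simp only [hs2def, hwdef]
        by_cases h1 : i = j
        · rw [if_pos h1, h1]
          have : 0 ≤ s' j := hs'0 j
          linarith [hT'0]
        · rw [if_neg h1]
          by_cases h2 : i = k
          · rw [if_pos h2, h2]
            have hcalc : T' * (dj / dk) ≤ (s' k * dk / dj) * (dj / dk) :=
              mul_le_mul_of_nonneg_right hT'sk (by positivity)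
            have heq : (s' k * dk / dj) * (dj / dk) = s' k := by
              field_simp
            linarith [hcalc, heq ▸ hcalc]
          · rw [if_neg h2]
            linarith [hs'0 i]
      have hP2 : Pmem π s2 := by
        intro U
        simp only [hs2def]
        rw [hsum_dir (-T') U]
        rcases le_or_gt (rate U) 0 with h | h
        · have h2 : 0 ≤ (-T') * rate U := by nlinarith [hT'0]
          linarith [hP' U]
        · have h1 := hT'rate U h
          rw [le_div_iff₀ h] at h1
          linarith [hfs U, hslack0 U]
      have hprov2 : Prov π s2 := by
        rcases Finset.mem_insert.mp (Am.min'_mem hAmne) with hT1 | hT2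
        · -- T' = s' k * dk / dj, coefficient k vanishes
          apply ihn s2 hs20 hP2
          have hT1' : T' = s' k * dk / dj := by rw [hT'def]; exact hT1
          have hkz : s2 k = 0 := by
            have e2 : wdir k = dj / dk := by simp [hwdef, Ne.symm hjk]
            simp only [hs2def, e2]
            rw [hT1']
            field_simp
            ring
          have hsub : (univ.filter (fun i => s2 i ≠ 0)) ⊆ S.erase k := by
            intro i hi
            simp only [Finset.mem_filter, Finset.mem_univ, true_and] at hi
            have hik : i ≠ k := fun h => hi (h ▸ hkz)
            rw [Finset.mem_erase]
            refine ⟨hik, ?_⟩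
            rw [hSdef]
            simp only [Finset.mem_filter, Finset.mem_univ, true_and]
            intro hsiz
            apply hi
            by_cases h1 : i = j
            · exact absurd (h1 ▸ hsiz) hsjne
            · have e0 : wdir i = 0 := by simp [hwdef, h1, hik]
              simp only [hs2def, e0, hs'def, hsiz]
              ring
          have h1 := Finset.card_le_card hsub
          rw [Finset.card_erase_of_mem hkS] at h1
          omega
        · obtain ⟨Um, hUm, hUmval⟩ := Finset.mem_image.mp hT2
          have hrU : 0 < rate Um := by
            have := (Finset.mem_filter.mp hUm).2
            simpa using this
          have hUb : Um ≠ ⊥ := fun h0 => by rw [h0, hrate_bot] at hrU; exact lt_irrefl 0 hrU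
          have hUt : Um ≠ ⊤ := fun h0 => by rw [h0, hrate_top] at hrU; exact lt_irrefl 0 hrU
          apply caseA π IH (by omega) s2 hs20 hP2 Um hUb hUt
          simp only [hs2def]
          rw [hsum_dir (-T') Um]
          have hUmval' : slack Um / rate Um = T' := by rw [hT'def]; exact hUmval
          have h2 : (-T') * rate Um = -slack Um := by
            rw [← hUmval', neg_mul, div_mul_eq_mul_div, mul_div_assoc, div_self hrU.ne',
              mul_one]
          linarith [hfs Um]
      -- convex combination
      have hTT : 0 < T + T' := by linarith
      have hl : 0 ≤ T' / (T + T') := by positivity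
      have hm : 0 ≤ T / (T + T') := by positivity
      have hlm : T' / (T + T') + T / (T + T') = 1 := by
        field_simp
        ring
      have hconv : s' = fun i => (T' / (T + T')) * s1 i + (T / (T + T')) * s2 i := by
        funext i
        simp only [hs1def, hs2def]
        field_simp
        ring
      have hprov' : Prov π s' := by
        rw [hconv]
        exact prov_convex π hs10 hs20 hl hm hlm hprov1 hprov2
      exact prov_mono π hs'0 hs'le hprov'


end BLaux


open Module

/-- The Shannon entropy (in nats) of a probability mass function on a finite type. -/
noncomputable def shannonEntropy {α : Type*} [Fintype α] (X : α → ℝ) : ℝ :=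
  ∑ a : α, Real.negMulLog (X a)

/-- Discrete Brascamp–Lieb inequality over finite fields: if `V` is a finite-dimensional vector
space over `F_q`, `sᵢ ≥ 0`, and `πᵢ : V → Vᵢ` are linear maps such that
`dim U ≤ Σᵢ sᵢ·dim(πᵢ(U))` for every subspace `U ⊆ V`, then for every probability distribution
`X` on `V`, `H(X) ≤ Σᵢ sᵢ·H(πᵢ(X))`. -/
theorem stmt14 {F : Type*} [Field F] [Fintype F] {V : Type*} [AddCommGroup V] [Module F V]
    [Fintype V] [DecidableEq V] [FiniteDimensional F V]
    {m : ℕ} {W : Fin m → Type*} [∀ i, AddCommGroup (W i)] [∀ i, Module F (W i)]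
    [∀ i, Fintype (W i)] [∀ i, DecidableEq (W i)]
    (s : Fin m → ℝ) (hs : ∀ i, 0 ≤ s i)
    (π : ∀ i, V →ₗ[F] W i)
    (hdim : ∀ U : Submodule F V,
      (finrank F ↥U : ℝ) ≤ ∑ i, s i * (finrank F ↥(U.map (π i)) : ℝ))
    (X : V → ℝ) (hX0 : ∀ v, 0 ≤ X v) (hX1 : ∑ v : V, X v = 1) :
    shannonEntropy X ≤
      ∑ i, s i *
        shannonEntropy (fun w : W i => ∑ v ∈ Finset.univ.filter (fun v => π i v = w), X v) := by
  classical
  set Z : ∀ i, W i → ℝ :=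
    fun i w => ∑ v ∈ Finset.univ.filter (fun v => π i v = w), X v with hZdef
  have hZ0 : ∀ i w, 0 ≤ Z i w := fun i w =>
    Finset.sum_nonneg fun v _ => hX0 v
  have hfiber : ∀ (i : Fin m) (g : W i → ℝ),
      ∑ w, Z i w * g w = ∑ v, X v * g (π i v) := by
    intro i g
    calc ∑ w, Z i w * g w
        = ∑ w, ∑ v, (if π i v = w then X v * g w else 0) := by
          apply Finset.sum_congr rfl
          intro w _
          simp only [hZdef]
          rw [Finset.sum_filter, Finset.sum_mul]
          apply Finset.sum_congr rfl
          intro v _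
          by_cases h : π i v = w
          · rw [if_pos h, if_pos h]
          · rw [if_neg h, if_neg h, zero_mul]
    _ = ∑ v, ∑ w, (if π i v = w then X v * g w else 0) := Finset.sum_comm
    _ = ∑ v, X v * g (π i v) := by
        apply Finset.sum_congr rfl
        intro v _
        rw [Finset.sum_ite_eq]
        simp
  have hZ1 : ∀ i, ∑ w, Z i w = 1 := by
    intro i
    have := hfiber i (fun _ => 1)
    simpa [hX1] using this
  set Q : V → ℝ := fun v => ∏ i, (Z i (π i v)) ^ (s i) with hQdef
  have hQ0 : ∀ v, 0 ≤ Q v := fun v =>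
    Finset.prod_nonneg fun i _ => Real.rpow_nonneg (hZ0 _ _) _
  have hXleZ : ∀ v i, X v ≤ Z i (π i v) := by
    intro v i
    apply Finset.single_le_sum (fun x _ => hX0 x)
    simp
  have hQpos : ∀ v, 0 < X v → 0 < Q v := by
    intro v hv
    apply Finset.prod_pos
    intro i _
    exact Real.rpow_pos_of_pos (lt_of_lt_of_le hv (hXleZ v i)) _
  have hQsum : ∑ v, Q v ≤ 1 := by
    have h := BLaux.stmt_all F (finrank F V) V m W π s hs le_rfl hdim Z hZ0
    unfold BLaux.LHS BLaux.RHS at h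
    calc ∑ v, Q v ≤ ∏ i, (∑ w, Z i w) ^ (s i) := h
    _ = 1 := by
        apply Finset.prod_eq_one
        intro i _
        rw [hZ1 i, Real.one_rpow]
  have key : ∀ v, X v * Real.log (Q v) - X v * Real.log (X v) ≤ Q v - X v := by
    intro v
    rcases (hX0 v).eq_or_lt with h0 | h0
    · rw [← h0]
      simp only [zero_mul, sub_zero, sub_self]
      exact hQ0 v
    · have hQv : 0 < Q v := hQpos v h0
      have h1 : X v * Real.log (Q v) - X v * Real.log (X v) = X v * Real.log (Q v / X v) := by
        rw [Real.log_div hQv.ne' h0.ne']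
        ring
      rw [h1]
      have h2 : Real.log (Q v / X v) ≤ Q v / X v - 1 :=
        Real.log_le_sub_one_of_pos (div_pos hQv h0)
      have h3 : X v * Real.log (Q v / X v) ≤ X v * (Q v / X v - 1) :=
        mul_le_mul_of_nonneg_left h2 h0.le
      have h4 : X v * (Q v / X v - 1) = Q v - X v := by
        field_simp
      linarith
  have hlogQ : ∀ v, X v * Real.log (Q v) = X v * ∑ i, s i * Real.log (Z i (π i v)) := by
    intro v
    rcases (hX0 v).eq_or_lt with h0 | h0
    · rw [← h0, zero_mul, zero_mul]
    · congr 1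
      rw [hQdef]
      rw [Real.log_prod (fun i _ =>
        (Real.rpow_pos_of_pos (lt_of_lt_of_le h0 (hXleZ v i)) _).ne')]
      apply Finset.sum_congr rfl
      intro i _
      rw [Real.log_rpow (lt_of_lt_of_le h0 (hXleZ v i))]
  have gibbs : -∑ v, X v * Real.log (X v) ≤ -∑ v, X v * Real.log (Q v) := by
    have h1 := Finset.sum_le_sum (fun v (_ : v ∈ Finset.univ) => key v)
    rw [Finset.sum_sub_distrib, Finset.sum_sub_distrib, hX1] at h1
    linarith [hQsum]
  have eH : shannonEntropy X = -∑ v, X v * Real.log (X v) := by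
    unfold shannonEntropy Real.negMulLog
    rw [← Finset.sum_neg_distrib]
    apply Finset.sum_congr rfl
    intro v _
    ring
  rw [eH]
  calc -∑ v, X v * Real.log (X v) ≤ -∑ v, X v * Real.log (Q v) := gibbs
  _ = ∑ i, s i * shannonEntropy (fun w : W i => Z i w) := by
      have e1 : ∑ v, X v * Real.log (Q v)
          = ∑ v, ∑ i, s i * (X v * Real.log (Z i (π i v))) := by
        apply Finset.sum_congr rfl
        intro v _
        rw [hlogQ v, Finset.mul_sum]
        apply Finset.sum_congr rfl
        intro i _
        ring
      rw [e1, Finset.sum_comm, ← Finset.sum_neg_distrib]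
      apply Finset.sum_congr rfl
      intro i _
      have e2 : ∑ v, s i * (X v * Real.log (Z i (π i v)))
          = s i * ∑ w, Z i w * Real.log (Z i w) := by
        rw [hfiber i (fun w => Real.log (Z i w)), Finset.mul_sum]
      rw [e2]
      have e3 : shannonEntropy (fun w : W i => Z i w)
          = -∑ w, Z i w * Real.log (Z i w) := by
        unfold shannonEntropy Real.negMulLog
        rw [← Finset.sum_neg_distrib]
        apply Finset.sum_congr rfl
        intro w _
        ring
      rw [e3]
      ring
  _ = ∑ i, s i *
        shannonEntropy (fun w : W i => ∑ v ∈ Finset.univ.filter (fun v => π i v = w), X v) := by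
      apply Finset.sum_congr rfl
      intro i _
      rw [hZdef]
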